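/- For any vectors a, b in R^n and any p with 1 ≤ p ≤ 2, the inner product ⟨|b|^{p-2} b − |a|^{p-2} a, b − a⟩ is at least (p−1) |b − a|^2 (1 + |a|^2 + |b|^2)^{(p−2)/2}. -/
import Mathlib

open Real MeasureTheory
open scoped RealInnerProductSpace

-- M ≤ A^(p-2) when A^2 ≤ S, A > 0, p ≤ 2
private lemma aux_M_le {p A S : ℝ} (hp2 : p ≤ 2) (hA : 0 < A) (hS : A ^ 2 ≤ S) :
    S ^ ((p - 2) / 2) ≤ A ^ (p - 2) := by
  have h1 : A ^ (p - 2) = (A ^ 2) ^ ((p - 2) / 2) := by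
    rw [← Real.rpow_natCast A 2, ← Real.rpow_mul hA.le]
    congr 1; ring
  rw [h1]
  exact Real.rpow_le_rpow_of_nonpos (by positivity) hS (by linarith)

-- Bernoulli consequence: for 0 < A ≤ B, (p-1)(B-A)B^(p-2) ≤ B^(p-1) - A^(p-1)
private lemma aux_bern {p A B : ℝ} (hp1 : 1 ≤ p) (hp2 : p ≤ 2) (hA : 0 < A) (hAB : A ≤ B) :
    (p - 1) * (B - A) * B ^ (p - 2) ≤ B ^ (p - 1) - A ^ (p - 1) := by
  have hB : 0 < B := lt_of_lt_of_le hA hAB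
  have hdiv : A ^ (p - 1) = (A / B) ^ (p - 1) * B ^ (p - 1) := by
    rw [← Real.mul_rpow (by positivity) hB.le, div_mul_cancel₀ _ hB.ne']
  have hbern : (A / B) ^ (p - 1) ≤ 1 + (p - 1) * (A / B - 1) := by
    have := rpow_one_add_le_one_add_mul_self (s := A / B - 1)
      (by nlinarith [div_nonneg hA.le hB.le]) (p := p - 1)
      (by linarith) (by linarith)
    simpa using this
  have hBp : B ^ (p - 1) = B ^ (p - 2) * B := by
    rw [show p - 1 = (p - 2) + 1 by ring, Real.rpow_add hB, Real.rpow_one]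
  have hBpos : (0:ℝ) < B ^ (p - 1) := Real.rpow_pos_of_pos hB _
  have h2 : A ^ (p - 1) ≤ (1 + (p - 1) * (A / B - 1)) * B ^ (p - 1) := by
    rw [hdiv]
    exact mul_le_mul_of_nonneg_right hbern hBpos.le
  have h3 : (A / B - 1) * B = A - B := by field_simp
  have h4 : (A / B - 1) * B ^ (p - 1) = (A - B) * B ^ (p - 2) := by
    rw [hBp, show (A / B - 1) * (B ^ (p - 2) * B) = ((A / B - 1) * B) * B ^ (p - 2) by ring, h3]
  nlinarith [h2, h4]

-- the "t = AB" case, for 0 < A ≤ B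
private lemma aux_key {p A B M : ℝ} (hp1 : 1 ≤ p) (hp2 : p ≤ 2) (hA : 0 < A) (hAB : A ≤ B)
    (hM0 : 0 ≤ M) (hMB : M ≤ B ^ (p - 2)) :
    (p - 1) * (B - A) ^ 2 * M ≤ (B ^ (p - 1) - A ^ (p - 1)) * (B - A) := by
  have h1 := aux_bern hp1 hp2 hA hAB
  have hBA : 0 ≤ B - A := by linarith
  have hp1' : 0 ≤ p - 1 := by linarith
  nlinarith [mul_le_mul_of_nonneg_right h1 hBA,
    mul_le_mul_of_nonneg_right (mul_le_mul_of_nonneg_left hMB (mul_nonneg hp1' hBA)) hBA]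

private lemma real_key {p A B t : ℝ} (hp1 : 1 ≤ p) (hp2 : p ≤ 2) (hA : 0 ≤ A) (hB : 0 ≤ B)
    (ht : |t| ≤ A * B) :
    (p - 1) * (A ^ 2 + B ^ 2 - 2 * t) * (1 + A ^ 2 + B ^ 2) ^ ((p - 2) / 2) ≤
      A ^ (p - 2) * A ^ 2 + B ^ (p - 2) * B ^ 2 - (A ^ (p - 2) + B ^ (p - 2)) * t := by
  set M := (1 + A ^ 2 + B ^ 2) ^ ((p - 2) / 2) with hM
  have hM0 : 0 ≤ M := Real.rpow_nonneg (by positivity) _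
  have hM1 : M ≤ 1 := by
    rw [hM]
    calc (1 + A ^ 2 + B ^ 2) ^ ((p - 2) / 2) ≤ (1:ℝ) ^ ((p - 2) / 2) :=
          Real.rpow_le_rpow_of_nonpos one_pos (by nlinarith) (by linarith)
      _ = 1 := Real.one_rpow _
  -- degenerate cases
  rcases eq_or_lt_of_le hA with hA0 | hA0
  · -- A = 0
    have ht0 : t = 0 := by
      have : |t| ≤ 0 := by nlinarith [abs_nonneg t]
      exact abs_nonpos_iff.mp this
    subst ht0
    rcases eq_or_lt_of_le hB with hB0 | hB0
    · rw [← hA0, ← hB0]; norm_num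
    · have hMB : M ≤ B ^ (p - 2) := aux_M_le hp2 hB0 (by nlinarith)
      rw [← hA0]
      have h1 : (p - 1) * (0 ^ 2 + B ^ 2 - 2 * 0) * M ≤ B ^ (p - 2) * B ^ 2 := by
        nlinarith [mul_le_mul_of_nonneg_left hMB (sq_nonneg B), mul_nonneg (sq_nonneg B) hM0]
      nlinarith [h1]
  rcases eq_or_lt_of_le hB with hB0 | hB0
  · have ht0 : t = 0 := by
      have : |t| ≤ 0 := by nlinarith [abs_nonneg t]
      exact abs_nonpos_iff.mp this
    subst ht0
    have hMA : M ≤ A ^ (p - 2) := aux_M_le hp2 hA0 (by nlinarith)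
    rw [← hB0]
    have h1 : (p - 1) * (A ^ 2 + 0 ^ 2 - 2 * 0) * M ≤ A ^ (p - 2) * A ^ 2 := by
      nlinarith [mul_le_mul_of_nonneg_left hMA (sq_nonneg A), mul_nonneg (sq_nonneg A) hM0]
    nlinarith [h1]
  · -- A > 0, B > 0
    have hMA : M ≤ A ^ (p - 2) := aux_M_le hp2 hA0 (by nlinarith)
    have hMB : M ≤ B ^ (p - 2) := aux_M_le hp2 hB0 (by nlinarith)
    have hApow : A ^ (p - 1) = A ^ (p - 2) * A := by
      rw [show p - 1 = (p - 2) + 1 by ring, Real.rpow_add hA0, Real.rpow_one]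
    have hBpow : B ^ (p - 1) = B ^ (p - 2) * B := by
      rw [show p - 1 = (p - 2) + 1 by ring, Real.rpow_add hB0, Real.rpow_one]
    have htAB : t ≤ A * B := (abs_le.mp ht).2
    have hp1' : 0 ≤ p - 1 := by linarith
    have hcoef : 2 * (p - 1) * M ≤ A ^ (p - 2) + B ^ (p - 2) := by
      nlinarith [hMA, hMB, hM0]
    have hkey : (p - 1) * (B - A) ^ 2 * M ≤ (B ^ (p - 1) - A ^ (p - 1)) * (B - A) := by
      rcases le_total A B with h | h
      · exact aux_key hp1 hp2 hA0 h hM0 hMB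
      · have h2 := aux_key hp1 hp2 hB0 h hM0 hMA
        have e1 : (A - B) ^ 2 = (B - A) ^ 2 := by ring
        have e2 : (A ^ (p - 1) - B ^ (p - 1)) * (A - B)
            = (B ^ (p - 1) - A ^ (p - 1)) * (B - A) := by ring
        rw [e1, e2] at h2
        exact h2
    have hkey' : (p - 1) * (B - A) ^ 2 * M ≤
        A ^ (p - 2) * A ^ 2 + B ^ (p - 2) * B ^ 2 - (A ^ (p - 2) + B ^ (p - 2)) * (A * B) := by
      rw [hApow, hBpow] at hkey
      nlinarith [hkey]
    have hc : 2 * (p - 1) * M * (A * B - t) ≤ (A ^ (p - 2) + B ^ (p - 2)) * (A * B - t) :=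
      mul_le_mul_of_nonneg_right hcoef (by linarith)
    calc (p - 1) * (A ^ 2 + B ^ 2 - 2 * t) * M
        = (p - 1) * (B - A) ^ 2 * M + 2 * (p - 1) * M * (A * B - t) := by ring
      _ ≤ (A ^ (p - 2) * A ^ 2 + B ^ (p - 2) * B ^ 2 - (A ^ (p - 2) + B ^ (p - 2)) * (A * B))
          + (A ^ (p - 2) + B ^ (p - 2)) * (A * B - t) := add_le_add hkey' hc
      _ = A ^ (p - 2) * A ^ 2 + B ^ (p - 2) * B ^ 2 - (A ^ (p - 2) + B ^ (p - 2)) * t := by ring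

theorem stmt1 (n : ℕ) (p : ℝ) (hp1 : 1 ≤ p) (hp2 : p ≤ 2)
    (a b : EuclideanSpace ℝ (Fin n)) :
    ⟪‖b‖ ^ (p - 2) • b - ‖a‖ ^ (p - 2) • a, b - a⟫ ≥
      (p - 1) * ‖b - a‖ ^ 2 * (1 + ‖a‖ ^ 2 + ‖b‖ ^ 2) ^ ((p - 2) / 2) := by
  have hlhs : ⟪‖b‖ ^ (p - 2) • b - ‖a‖ ^ (p - 2) • a, b - a⟫ =
      ‖a‖ ^ (p - 2) * ‖a‖ ^ 2 + ‖b‖ ^ (p - 2) * ‖b‖ ^ 2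
        - (‖a‖ ^ (p - 2) + ‖b‖ ^ (p - 2)) * ⟪a, b⟫ := by
    simp only [inner_sub_left, inner_sub_right, real_inner_smul_left,
      real_inner_self_eq_norm_sq, real_inner_comm a b]
    ring
  have hnorm : ‖b - a‖ ^ 2 = ‖a‖ ^ 2 + ‖b‖ ^ 2 - 2 * ⟪a, b⟫ := by
    rw [norm_sub_sq_real, real_inner_comm]; ring
  rw [hlhs, hnorm, ge_iff_le]
  exact real_key hp1 hp2 (norm_nonneg a) (norm_nonneg b) (abs_real_inner_le_norm a b)
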